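/- Let P1 be a shortest (s,u)-path, P2 a (u,x)-path of length k whose vertices (other than possibly u) all lie at distance at least p = dist_G(s,u) from s and which is internally disjoint from P1, and let P3, P4 be an (x,v)-path and a (v,t)-path, internally vertex-disjoint from each other and avoiding all vertices of P1 and P2 except x, where dist_G(s,v) = p. Then the concatenation P1∘P2∘P3∘P4 is a simple (s,t)-path of length at least dist_G(s,t)+k. -/

import Mathlib

variable {V : Type*}

/-- `l` is a (nonempty) directed walk in the digraph `G`. -/
def IsWalk (G : V → V → Prop) : List V → Prop
  | [] => False
  | [_] => True
  | a :: b :: l => G a b ∧ IsWalk G (b :: l)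

/-- `l` is a simple directed path in `G`. -/
def IsPath (G : V → V → Prop) (l : List V) : Prop := IsWalk G l ∧ l.Nodup

/-- `l` is a walk from `s` to `t` in `G`. -/
def IsWalkFrom (G : V → V → Prop) (s t : V) (l : List V) : Prop :=
  IsWalk G l ∧ l.head? = some s ∧ l.getLast? = some t

/-- `l` is a simple path from `s` to `t` in `G`. -/
def IsPathFrom (G : V → V → Prop) (s t : V) (l : List V) : Prop :=
  IsPath G l ∧ l.head? = some s ∧ l.getLast? = some t

/-- The length (number of edges) of a path given as a vertex list. -/
def pathLen (l : List V) : ℕ := l.length - 1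

/-- Directed shortest-path distance (`⊤` if unreachable). -/
noncomputable def ddist (G : V → V → Prop) (s t : V) : ℕ∞ :=
  sInf {n : ℕ∞ | ∃ l, IsPathFrom G s t l ∧ (pathLen l : ℕ∞) = n}

section Aux

variable {G : V → V → Prop}

lemma isWalk_ne_nil {l : List V} (h : IsWalk G l) : l ≠ [] := by
  rintro rfl; exact h

lemma isWalk_singleton (a : V) : IsWalk G [a] := trivial

lemma isWalk_append {l1 l2 : List V} {w : V} :
    IsWalk G (l1 ++ w :: l2) ↔ IsWalk G (l1 ++ [w]) ∧ IsWalk G (w :: l2) := by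
  induction l1 with
  | nil => simp [IsWalk, isWalk_singleton]
  | cons a l1 ih =>
    cases l1 with
    | nil => simp [IsWalk]
    | cons b l1' =>
      simp only [List.cons_append, IsWalk] at *
      tauto

lemma head_eq_of_head? {l : List V} {a s : V} (h : (a :: l).head? = some s) : a = s := by
  simpa using h

lemma eq_cons_of_head? {l : List V} {s : V} (h : l.head? = some s) : l = s :: l.tail := by
  cases l with
  | nil => simp at h
  | cons a l => simpa using congrArg (· :: l) (head_eq_of_head? h)

/-- Decomposition of a list with known last element. -/
lemma eq_dropLast_append {l : List V} {m : V} (h : l.getLast? = some m) :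
    l = l.dropLast ++ [m] := by
  have hne : l ≠ [] := by rintro rfl; simp at h
  have := List.dropLast_append_getLast hne
  rw [List.getLast?_eq_getLast hne] at h
  simp only [Option.some.injEq] at h
  rw [← h]
  exact this.symm

lemma isWalkFrom_glue {s m t : V} {l1 l2 : List V}
    (h1 : IsWalkFrom G s m l1) (h2 : IsWalkFrom G m t l2) :
    IsWalkFrom G s t (l1 ++ l2.tail) := by
  obtain ⟨hw1, hh1, hl1⟩ := h1
  obtain ⟨hw2, hh2, hl2⟩ := h2
  have e2 : l2 = m :: l2.tail := eq_cons_of_head? hh2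
  have e1 : l1 = l1.dropLast ++ [m] := eq_dropLast_append hl1
  have key : l1 ++ l2.tail = l1.dropLast ++ m :: l2.tail := by
    rw [e1]; simp
  refine ⟨?_, ?_, ?_⟩
  · rw [key]
    exact isWalk_append.mpr ⟨by rw [← e1]; exact hw1, by rw [← e2]; exact hw2⟩
  · rw [eq_cons_of_head? hh1]
    simp
  · rw [key, ← e2, List.getLast?_append_of_ne_nil _ (isWalk_ne_nil hw2)]
    exact hl2

lemma pathLen_glue {l1 l2 : List V} (h1 : l1 ≠ []) (h2 : l2 ≠ []) :
    pathLen (l1 ++ l2.tail) = pathLen l1 + pathLen l2 := by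
  have n1 : 1 ≤ l1.length := List.length_pos_iff.mpr h1
  have n2 : 1 ≤ l2.length := List.length_pos_iff.mpr h2
  simp only [pathLen, List.length_append, List.length_tail]
  omega


lemma exists_path_of_walkFrom :
    ∀ (n : ℕ) (l : List V) (s t : V), l.length ≤ n → IsWalkFrom G s t l →
      ∃ l', IsPathFrom G s t l' ∧ l'.Sublist l := by
  intro n
  induction n with
  | zero =>
    intro l s t hl hw
    cases l with
    | nil => exact absurd hw.1 id
    | cons a l => simp at hl
  | succ n ih =>
    rintro (_ | ⟨a, rest⟩) s t hl ⟨hwalk, hhead, hlast⟩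
    · exact absurd hwalk id
    have has : a = s := head_eq_of_head? hhead
    subst has
    cases rest with
    | nil =>
      have : a = t := by simpa using hlast
      subst this
      exact ⟨[a], ⟨⟨trivial, List.nodup_singleton a⟩, rfl, rfl⟩, List.Sublist.refl _⟩
    | cons r rest' =>
      by_cases ha : a ∈ r :: rest'
      · obtain ⟨b, c, hbc⟩ := List.append_of_mem ha
        rw [hbc] at hwalk hlast hl ⊢
        have hw2 : IsWalk G (a :: c) :=
          ((isWalk_append (l1 := a :: b) (l2 := c) (w := a)).mp (by simpa using hwalk)).2
        cases c with
        | nil =>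
          have hta : a = t := by
            have h1 : (a :: (b ++ [a])).getLast? = some a := by
              rw [show a :: (b ++ [a]) = (a :: b) ++ [a] by simp,
                List.getLast?_append_of_ne_nil _ (by simp)]
              rfl
            rw [h1] at hlast; simpa using hlast
          subst hta
          exact ⟨[a], ⟨⟨trivial, List.nodup_singleton a⟩, rfl, rfl⟩,
            (List.nil_sublist _).cons₂ a⟩
        | cons c0 c' =>
          have hlast' : (a :: c0 :: c').getLast? = some t := by
            have h1 : (a :: (b ++ a :: c0 :: c')).getLast? = (a :: c0 :: c').getLast? := by
              rw [show a :: (b ++ a :: c0 :: c') = (a :: b) ++ (a :: c0 :: c') by simp,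
                List.getLast?_append_of_ne_nil _ (by simp)]
            rw [h1] at hlast
            exact hlast
          obtain ⟨l', hl', hsub⟩ := ih (a :: c0 :: c') a t
            (by simp at hl ⊢; omega) ⟨hw2, rfl, hlast'⟩
          refine ⟨l', hl', hsub.trans ?_⟩
          refine List.Sublist.cons₂ a ?_
          have h2 := List.sublist_append_right (b ++ [a]) (c0 :: c')
          simpa using h2
      · have hwr : IsWalk G (r :: rest') := hwalk.2
        have hlastr : (r :: rest').getLast? = some t := by
          rw [List.getLast?_cons_cons] at hlast
          exact hlast
        obtain ⟨l', ⟨⟨hwl', hnd'⟩, hh', hl'⟩, hsub⟩ := ih (r :: rest') r t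
          (by simp at hl ⊢; omega) ⟨hwr, rfl, hlastr⟩
        have hal' : a ∉ l' := fun hmem => ha (hsub.subset hmem)
        have e' : l' = r :: l'.tail := eq_cons_of_head? hh'
        refine ⟨a :: l', ⟨⟨?_, List.nodup_cons.mpr ⟨hal', hnd'⟩⟩, rfl, ?_⟩, hsub.cons₂ a⟩
        · rw [e']
          exact ⟨hwalk.1, by rw [← e']; exact hwl'⟩
        · rw [e', List.getLast?_cons_cons, ← e']
          exact hl'
      

lemma ddist_le_pathLen {s t : V} {l : List V} (h : IsPathFrom G s t l) :
    ddist G s t ≤ (pathLen l : ℕ∞) := sInf_le ⟨l, h, rfl⟩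

lemma ddist_le_of_walkFrom {s t : V} {l : List V} (h : IsWalkFrom G s t l) :
    ddist G s t ≤ (pathLen l : ℕ∞) := by
  obtain ⟨l', hl', hsub⟩ := exists_path_of_walkFrom l.length l s t le_rfl h
  calc ddist G s t ≤ (pathLen l' : ℕ∞) := ddist_le_pathLen hl'
    _ ≤ _ := by
      have := hsub.length_le
      simp only [pathLen]
      exact_mod_cast Nat.sub_le_sub_right this 1

lemma exists_path_of_ddist {s t : V} {p : ℕ} (h : ddist G s t = (p : ℕ∞)) :
    ∃ l, IsPathFrom G s t l ∧ pathLen l = p := by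
  have hne : {n : ℕ∞ | ∃ l, IsPathFrom G s t l ∧ (pathLen l : ℕ∞) = n}.Nonempty := by
    by_contra hcon
    rw [Set.not_nonempty_iff_eq_empty] at hcon
    rw [ddist, hcon, sInf_empty] at h
    exact (ENat.coe_ne_top p) h.symm
  have hmem := csInf_mem hne
  rw [← ddist, h] at hmem
  obtain ⟨l, hl, hlen⟩ := hmem
  exact ⟨l, hl, by exact_mod_cast hlen⟩

end Aux

theorem stmt_8 (G : V → V → Prop) (s t u v x : V) (p k : ℕ)
    (P1 P2 P3 P4 : List V)
    (hu : ddist G s u = (p : ℕ∞)) (hv : ddist G s v = (p : ℕ∞))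
    (h1 : IsPathFrom G s u P1) (h1len : (pathLen P1 : ℕ∞) = ddist G s u)
    (h2 : IsPathFrom G u x P2) (h2len : pathLen P2 = k)
    (h2layer : ∀ w ∈ P2, w ≠ u → (p : ℕ∞) ≤ ddist G s w)
    (h2disj : ∀ w ∈ P2, w ≠ u → w ∉ P1)
    (h3 : IsPathFrom G x v P3) (h4 : IsPathFrom G v t P4)
    (h34 : ∀ w ∈ P3, w ∈ P4 → w = v)
    (havoid : ∀ w : V, (w ∈ P3 ∨ w ∈ P4) → (w ∈ P1 ∨ w ∈ P2) → w = x) :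
    IsPathFrom G s t (P1 ++ P2.tail ++ P3.tail ++ P4.tail) ∧
    ddist G s t + (k : ℕ∞) ≤ (pathLen (P1 ++ P2.tail ++ P3.tail ++ P4.tail) : ℕ∞) := by
  obtain ⟨⟨hw1, hnd1⟩, hh1, hl1⟩ := h1
  obtain ⟨⟨hw2, hnd2⟩, hh2, hl2⟩ := h2
  obtain ⟨⟨hw3, hnd3⟩, hh3, hl3⟩ := h3
  obtain ⟨⟨hw4, hnd4⟩, hh4, hl4⟩ := h4
  have n1 : P1 ≠ [] := isWalk_ne_nil hw1
  have n2 : P2 ≠ [] := isWalk_ne_nil hw2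
  have n3 : P3 ≠ [] := isWalk_ne_nil hw3
  have n4 : P4 ≠ [] := isWalk_ne_nil hw4
  have W12 : IsWalkFrom G s x (P1 ++ P2.tail) :=
    isWalkFrom_glue ⟨hw1, hh1, hl1⟩ ⟨hw2, hh2, hl2⟩
  have W123 : IsWalkFrom G s v (P1 ++ P2.tail ++ P3.tail) :=
    isWalkFrom_glue W12 ⟨hw3, hh3, hl3⟩
  have W : IsWalkFrom G s t (P1 ++ P2.tail ++ P3.tail ++ P4.tail) :=
    isWalkFrom_glue W123 ⟨hw4, hh4, hl4⟩
  -- nodup facts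
  have e2 : P2 = u :: P2.tail := eq_cons_of_head? hh2
  have e3 : P3 = x :: P3.tail := eq_cons_of_head? hh3
  have e4 : P4 = v :: P4.tail := eq_cons_of_head? hh4
  rw [e2] at hnd2; rw [e3] at hnd3; rw [e4] at hnd4
  obtain ⟨du, nd2t⟩ := List.nodup_cons.mp hnd2
  obtain ⟨dx3, nd3t⟩ := List.nodup_cons.mp hnd3
  obtain ⟨dv4, nd4t⟩ := List.nodup_cons.mp hnd4
  have mem2 : ∀ w ∈ P2.tail, w ∈ P2 := fun w hw => by
    rw [e2]; exact List.mem_cons_of_mem _ hw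
  have mem3 : ∀ w ∈ P3.tail, w ∈ P3 := fun w hw => by
    rw [e3]; exact List.mem_cons_of_mem _ hw
  have mem4 : ∀ w ∈ P4.tail, w ∈ P4 := fun w hw => by
    rw [e4]; exact List.mem_cons_of_mem _ hw
  have d12 : List.Disjoint P1 P2.tail := by
    intro w hwa hwb
    have hwu : w ≠ u := fun h => du (h ▸ hwb)
    exact h2disj w (mem2 w hwb) hwu hwa
  have nd12 : (P1 ++ P2.tail).Nodup := List.nodup_append.mpr ⟨hnd1, nd2t, fun a ha b hb hab => by subst hab; exact d12 ha hb⟩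
  have d3 : ∀ w ∈ P3.tail, w ∉ P1 ++ P2.tail := by
    intro w hw hmem
    have hx : w = x := by
      refine havoid w (Or.inl (mem3 w hw)) ?_
      rcases List.mem_append.mp hmem with h | h
      · exact Or.inl h
      · exact Or.inr (mem2 w h)
    exact dx3 (hx ▸ hw)
  have nd123 : (P1 ++ P2.tail ++ P3.tail).Nodup :=
    List.nodup_append.mpr ⟨nd12, nd3t, fun a ha b hb hab => by subst hab; exact d3 a hb ha⟩
  have d4 : ∀ w ∈ P4.tail, w ∉ P1 ++ P2.tail ++ P3.tail := by
    intro w hw hmem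
    have hw4' : w ∈ P4 := mem4 w hw
    have hwv : w ≠ v := fun h => dv4 (h ▸ hw)
    rcases List.mem_append.mp hmem with h | h3t
    · have hx : w = x := by
        refine havoid w (Or.inr hw4') ?_
        rcases List.mem_append.mp h with h' | h'
        · exact Or.inl h'
        · exact Or.inr (mem2 w h')
      have hxv : x = v := h34 x (by rw [e3]; exact List.mem_cons_self) (hx ▸ hw4')
      exact hwv (hx.trans hxv)
    · exact hwv (h34 w (mem3 w h3t) hw4')
  have ndL : (P1 ++ P2.tail ++ P3.tail ++ P4.tail).Nodup :=
    List.nodup_append.mpr ⟨nd123, nd4t, fun a ha b hb hab => by subst hab; exact d4 a hb ha⟩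
  refine ⟨⟨⟨W.1, ndL⟩, W.2.1, W.2.2⟩, ?_⟩
  -- length bound
  have ne12 : P1 ++ P2.tail ≠ [] := by simp [n1]
  have ne123 : P1 ++ P2.tail ++ P3.tail ≠ [] := by simp [n1]
  have hp1 : pathLen P1 = p := by
    rw [hu] at h1len; exact_mod_cast h1len
  have lenL : pathLen (P1 ++ P2.tail ++ P3.tail ++ P4.tail)
      = p + k + pathLen P3 + pathLen P4 := by
    rw [pathLen_glue ne123 n4, pathLen_glue ne12 n3, pathLen_glue n1 n2, hp1, h2len]
  obtain ⟨Q, hQ, hQlen⟩ := exists_path_of_ddist hv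
  have hQne : Q ≠ [] := isWalk_ne_nil hQ.1.1
  have WQ : IsWalkFrom G s t (Q ++ P4.tail) :=
    isWalkFrom_glue ⟨hQ.1.1, hQ.2.1, hQ.2.2⟩ ⟨hw4, hh4, hl4⟩
  have hdst : ddist G s t ≤ ((p + pathLen P4 : ℕ) : ℕ∞) := by
    have h' := ddist_le_of_walkFrom WQ
    rwa [pathLen_glue hQne n4, hQlen] at h'
  rw [lenL]
  calc ddist G s t + (k : ℕ∞) ≤ ((p + pathLen P4 : ℕ) : ℕ∞) + (k : ℕ∞) :=
        by gcongr
    _ ≤ ((p + k + pathLen P3 + pathLen P4 : ℕ) : ℕ∞) := by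
        rw [← Nat.cast_add]
        exact_mod_cast (by omega : p + pathLen P4 + k ≤ p + k + pathLen P3 + pathLen P4)
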